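/- Under the stated assumptions, the relaxation step is an ℓ¹-contraction on the box of admissible densities: for all ρ, σ ∈ ∏_{j=1}^M [0,R_j], one has ∑_{j=1}^M |T_j(ρ) − T_j(σ)| ≤ ∑_{j=1}^M |ρ_j − σ_j|. (Pointwise core of the contraction estimate (FL2) in the proof of Lemma 3.2, obtained from monotonicity and mass conservation of the relaxation step via the Crandall–Tartar lemma.) -/

import Mathlib

open Set

/-- Mean value theorem in slope form with two-sided derivative bounds on an interval. -/
lemma mvt_slope_mem {f : ℝ → ℝ} (hf : Differentiable ℝ f) {lo hi m Mb : ℝ}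
    (hmM : m ≤ Mb) (hd : ∀ x ∈ Icc lo hi, deriv f x ∈ Icc m Mb)
    {u v : ℝ} (hu : u ∈ Icc lo hi) (hv : v ∈ Icc lo hi) :
    ∃ a ∈ Icc m Mb, f u - f v = a * (u - v) := by
  rcases lt_trichotomy u v with h | h | h
  · obtain ⟨c, hc, hderiv⟩ := exists_hasDerivAt_eq_slope f (deriv f) h
      hf.continuous.continuousOn (fun x _ => (hf x).hasDerivAt)
    refine ⟨deriv f c, hd c ⟨hu.1.trans hc.1.le, hc.2.le.trans hv.2⟩, ?_⟩
    have hne : v - u ≠ 0 := sub_ne_zero.mpr h.ne'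
    field_simp at hderiv
    nlinarith [hderiv]
  · exact ⟨m, ⟨le_refl m, hmM⟩, by rw [h]; ring⟩
  · obtain ⟨c, hc, hderiv⟩ := exists_hasDerivAt_eq_slope f (deriv f) h
      hf.continuous.continuousOn (fun x _ => (hf x).hasDerivAt)
    refine ⟨deriv f c, hd c ⟨hv.1.trans hc.1.le, hc.2.le.trans hu.2⟩, ?_⟩
    have hne : u - v ≠ 0 := sub_ne_zero.mpr h.ne'
    field_simp at hderiv
    nlinarith [hderiv]

/-- Pointwise core of the contraction estimate (FL2) in the proof of Lemma 3.2:
the relaxation step is an ℓ¹-contraction on the box of admissible densities. -/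
theorem relaxation_step_l1_contraction
(M : ℕ) (hM : 1 ≤ M)
    (R : ℕ → ℝ) (hR : ∀ j, 1 ≤ j → j ≤ M → 0 < R j)
    (𝒮 τ Δt : ℝ) (h𝒮 : 0 < 𝒮) (hτ : 0 < τ) (hΔt : 0 < Δt)
    (hΔtτ : Δt ≤ τ / (2 * 𝒮))
    (S : ℕ → ℝ → ℝ → ℝ)
    (hS0 : ∀ u w, S 0 u w = 0)
    (hSM : ∀ u w, S M u w = 0)
    (hSC1 : ∀ j, 1 ≤ j → j ≤ M - 1 → ContDiff ℝ 1 (Function.uncurry (S j)))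
    (hS1 : ∀ j, 1 ≤ j → j ≤ M - 1 → ∀ u ∈ Icc (0:ℝ) (R j), ∀ w ∈ Icc (0:ℝ) (R (j+1)),
      deriv (fun u' => S j u' w) u ∈ Icc (0:ℝ) 𝒮)
    (hS2 : ∀ j, 1 ≤ j → j ≤ M - 1 → ∀ u ∈ Icc (0:ℝ) (R j), ∀ w ∈ Icc (0:ℝ) (R (j+1)),
      deriv (fun w' => S j u w') w ∈ Icc (-𝒮) (0:ℝ))
    (hS00 : ∀ j, 1 ≤ j → j ≤ M - 1 → S j 0 0 = 0)
    (hSRR : ∀ j, 1 ≤ j → j ≤ M - 1 → S j (R j) (R (j+1)) = 0)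
    (g : (ℕ → ℝ) → ℕ → ℝ)
    (hg : ∀ ρ j, g ρ j = S (j-1) (ρ (j-1)) (ρ j) - S j (ρ j) (ρ (j+1)))
    (T : (ℕ → ℝ) → ℕ → ℝ)
    (hT : ∀ ρ j, T ρ j = ρ j + (Δt / τ) * g ρ j)
    (ρ σ : ℕ → ℝ)
    (hρ : ∀ j, 1 ≤ j → j ≤ M → ρ j ∈ Icc (0:ℝ) (R j))
    (hσ : ∀ j, 1 ≤ j → j ≤ M → σ j ∈ Icc (0:ℝ) (R j)) :
    ∑ j ∈ Finset.Icc 1 M, |T ρ j - T σ j| ≤ ∑ j ∈ Finset.Icc 1 M, |ρ j - σ j| := by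
  classical
  set lam : ℝ := Δt / τ with hlam
  have hlam0 : 0 ≤ lam := le_of_lt (div_pos hΔt hτ)
  have hΔS : Δt * (2 * 𝒮) ≤ τ := (le_div_iff₀ (by positivity)).mp hΔtτ
  have hlamS : lam * 𝒮 ≤ 1 / 2 := by
    rw [hlam, div_mul_eq_mul_div, div_le_iff₀ hτ]
    nlinarith
  -- Existence of mean-value coefficients with the right signs and bounds.
  have key : ∀ j : ℕ, ∃ A B : ℝ, A ∈ Icc (0:ℝ) 𝒮 ∧ B ∈ Icc (-𝒮) (0:ℝ) ∧
      ((j = 0 ∨ M ≤ j) → A = 0 ∧ B = 0) ∧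
      (j ≤ M → S j (ρ j) (ρ (j+1)) - S j (σ j) (σ (j+1))
        = A * (ρ j - σ j) + B * (ρ (j+1) - σ (j+1))) := by
    intro j
    by_cases hcase : 1 ≤ j ∧ j ≤ M - 1
    · obtain ⟨hj1, hj2⟩ := hcase
      have hjM : j ≤ M := by omega
      have hj1M : 1 ≤ j + 1 := by omega
      have hj1M' : j + 1 ≤ M := by omega
      have hdiff : Differentiable ℝ (Function.uncurry (S j)) :=
        (hSC1 j hj1 hj2).differentiable one_ne_zero
      have hd1 : Differentiable ℝ (fun u' => S j u' (ρ (j+1))) :=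
        hdiff.comp (differentiable_id.prodMk (differentiable_const _))
      have hd2 : Differentiable ℝ (fun w' => S j (σ j) w') :=
        hdiff.comp ((differentiable_const _).prodMk differentiable_id)
      obtain ⟨A, hA, hAeq⟩ := mvt_slope_mem hd1 h𝒮.le
        (fun x hx => hS1 j hj1 hj2 x hx (ρ (j+1)) (hρ (j+1) hj1M hj1M'))
        (hρ j hj1 hjM) (hσ j hj1 hjM)
      obtain ⟨B, hB, hBeq⟩ := mvt_slope_mem hd2 (by linarith)
        (fun x hx => hS2 j hj1 hj2 (σ j) (hσ j hj1 hjM) x hx)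
        (hρ (j+1) hj1M hj1M') (hσ (j+1) hj1M hj1M')
      refine ⟨A, B, hA, hB, fun h => by omega, fun _ => ?_⟩
      have : S j (ρ j) (ρ (j+1)) - S j (σ j) (σ (j+1))
          = (S j (ρ j) (ρ (j+1)) - S j (σ j) (ρ (j+1)))
            + (S j (σ j) (ρ (j+1)) - S j (σ j) (σ (j+1))) := by ring
      rw [this, hAeq, hBeq]
    · refine ⟨0, 0, ⟨le_refl 0, h𝒮.le⟩, ⟨by linarith, le_refl 0⟩, fun _ => ⟨rfl, rfl⟩,
        fun hjM => ?_⟩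
      have hj0M : j = 0 ∨ j = M := by omega
      rcases hj0M with h0 | hMM
      · subst h0; simp [hS0]
      · subst hMM; simp [hSM]
  choose A B hA hB hbd heq using key
  set X : ℕ → ℝ := fun j => |ρ j - σ j| with hX
  have hX0 : ∀ j, 0 ≤ X j := fun j => abs_nonneg _
  -- pointwise bound
  have hpt : ∀ j ∈ Finset.Icc 1 M,
      |T ρ j - T σ j| ≤ (1 - lam * (-B (j-1)) - lam * A j) * X j
        + lam * A (j-1) * X (j-1) + lam * (-B j) * X (j+1) := by
    intro j hj
    rw [Finset.mem_Icc] at hj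
    obtain ⟨hj1, hjM⟩ := hj
    have h1 := heq (j-1) (by omega)
    have h2 := heq j hjM
    have hj1' : j - 1 + 1 = j := by omega
    rw [hj1'] at h1
    have hE : T ρ j - T σ j
        = (1 - lam * (-B (j-1)) - lam * A j) * (ρ j - σ j)
          + lam * A (j-1) * (ρ (j-1) - σ (j-1)) + lam * (-B j) * (ρ (j+1) - σ (j+1)) := by
      rw [hT, hT, hg, hg]
      linear_combination lam * h1 - lam * h2
    have hc1 : 0 ≤ 1 - lam * (-B (j-1)) - lam * A j := by
      have h3 : lam * A j ≤ lam * 𝒮 := mul_le_mul_of_nonneg_left (hA j).2 hlam0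
      have h4 : lam * (-B (j-1)) ≤ lam * 𝒮 :=
        mul_le_mul_of_nonneg_left (by linarith [(hB (j-1)).1]) hlam0
      linarith
    have hc2 : 0 ≤ lam * A (j-1) := mul_nonneg hlam0 (hA (j-1)).1
    have hc3 : 0 ≤ lam * (-B j) := mul_nonneg hlam0 (by linarith [(hB j).2])
    calc |T ρ j - T σ j|
        ≤ |(1 - lam * (-B (j-1)) - lam * A j) * (ρ j - σ j)
            + lam * A (j-1) * (ρ (j-1) - σ (j-1))| + |lam * (-B j) * (ρ (j+1) - σ (j+1))| := by
          rw [hE]; exact abs_add_le _ _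
      _ ≤ |(1 - lam * (-B (j-1)) - lam * A j) * (ρ j - σ j)|
          + |lam * A (j-1) * (ρ (j-1) - σ (j-1))| + |lam * (-B j) * (ρ (j+1) - σ (j+1))| :=
          add_le_add_left (abs_add_le _ _) _
      _ = (1 - lam * (-B (j-1)) - lam * A j) * X j
          + lam * A (j-1) * X (j-1) + lam * (-B j) * X (j+1) := by
          have t1 : |(1 - lam * (-B (j-1)) - lam * A j) * (ρ j - σ j)|
              = (1 - lam * (-B (j-1)) - lam * A j) * X j := by
            rw [abs_mul, abs_of_nonneg hc1]
          have t2 : |lam * A (j-1) * (ρ (j-1) - σ (j-1))| = lam * A (j-1) * X (j-1) := by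
            rw [abs_mul, abs_of_nonneg hc2]
          have t3 : |lam * (-B j) * (ρ (j+1) - σ (j+1))| = lam * (-B j) * X (j+1) := by
            rw [abs_mul, abs_of_nonneg hc3]
          rw [t1, t2, t3]
  refine (Finset.sum_le_sum hpt).trans (le_of_eq ?_)
  -- the summed coefficients telescope to 1
  set F : ℕ → ℝ := fun k => lam * A k * X k with hF
  set G : ℕ → ℝ := fun k => lam * (-B k) * X (k+1) with hG
  have hF0 : F 0 = 0 := by simp [hF, (hbd 0 (Or.inl rfl)).1]
  have hFM : F M = 0 := by simp [hF, (hbd M (Or.inr le_rfl)).1]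
  have hG0 : G 0 = 0 := by simp [hG, (hbd 0 (Or.inl rfl)).2]
  have hGM : G M = 0 := by simp [hG, (hbd M (Or.inr le_rfl)).2]
  have hIcc : ∀ f : ℕ → ℝ, ∑ j ∈ Finset.Icc 1 M, f j = ∑ i ∈ Finset.range M, f (i+1) := by
    intro f
    rw [← Finset.Ico_add_one_right_eq_Icc, Finset.sum_Ico_eq_sum_range]
    simp [Nat.add_comm]
  rw [hIcc, hIcc]
  have hterm : ∀ i ∈ Finset.range M,
      (1 - lam * (-B (i+1-1)) - lam * A (i+1)) * X (i+1)
        + lam * A (i+1-1) * X (i+1-1) + lam * (-B (i+1)) * X (i+1+1)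
      = X (i+1) + (F i - F (i+1)) + (G (i+1) - G i) := by
    intro i _
    have : i + 1 - 1 = i := rfl
    rw [this]
    simp only [hF, hG]
    ring
  rw [Finset.sum_congr rfl hterm, Finset.sum_add_distrib, Finset.sum_add_distrib,
    Finset.sum_range_sub' F M, Finset.sum_range_sub G M, hF0, hFM, hG0, hGM]
  ring
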